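/- Let (G, <) be a countable group equipped with a bi-order. Then there exists an injective group homomorphism ρ : G → Homeo₊(ℝ) such that: (i) for every g ∈ G with 1 < g, sup{x ∈ ℝ : ρ(g)(x) > x} > sup{x ∈ ℝ : ρ(g)(x) < x}, the suprema being taken in the extended reals [−∞, +∞] with sup ∅ = −∞; and (ii) for all g, h ∈ G with g ≫ h, sup{x ∈ ℝ : ρ(g)(x) ≠ x} > sup{x ∈ ℝ : ρ(h)(x) ≠ x}. -/

import Mathlib

/-- A bi-order on a group `G`: a strict linear order (irreflexive, transitive, total)
invariant under left and right multiplication. -/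
structure IsBiOrder {G : Type*} [Group G] (r : G → G → Prop) : Prop where
  irrefl : ∀ x, ¬ r x x
  trans : ∀ x y z, r x y → r y z → r x z
  total : ∀ x y, x ≠ y → r x y ∨ r y x
  mul_left : ∀ x y z, r x y → r (z * x) (z * y)
  mul_right : ∀ x y z, r x y → r (x * z) (y * z)

/-- The supremum of a set of reals, computed in the extended reals `[-∞, +∞]`
(so that `realSup ∅ = ⊥ = -∞`). -/
noncomputable def realSup (s : Set ℝ) : EReal :=
  sSup ((fun x : ℝ => (x : EReal)) '' s)

set_option linter.unusedSectionVars false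
set_option linter.unusedVariables false
set_option maxHeartbeats 1000000

section Core
variable {G : Type*} [Group G] [LinearOrder G]
variable [MulLeftMono G] [MulRightMono G]

def mm (g : G) : G := max g g⁻¹

lemma le_mm (g : G) : g ≤ mm g := le_max_left _ _
lemma inv_le_mm (g : G) : g⁻¹ ≤ mm g := le_max_right _ _
lemma one_le_mm (g : G) : 1 ≤ mm g := by
  rcases le_total g 1 with h | h
  · exact le_trans (Left.one_le_inv_iff.mpr h) (inv_le_mm g)
  · exact le_trans h (le_mm g)
lemma mm_inv (g : G) : mm g⁻¹ = mm g := by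
  simp [mm, max_comm]

lemma conj_mono (a : G) : Monotone (fun x : G => a * x * a⁻¹) := by
  intro x y h
  exact mul_le_mul_left (mul_le_mul_right h a) a⁻¹

lemma conj_le_conj_iff {a x y : G} : a * x * a⁻¹ ≤ a * y * a⁻¹ ↔ x ≤ y := by
  rw [mul_le_mul_iff_right, mul_le_mul_iff_left]

lemma conj_lt_conj_iff {a x y : G} : a * x * a⁻¹ < a * y * a⁻¹ ↔ x < y := by
  rw [mul_lt_mul_iff_right, mul_lt_mul_iff_left]

lemma mm_conj (a g : G) : mm (a * g * a⁻¹) = a * mm g * a⁻¹ := by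
  have h1 : (a * g * a⁻¹)⁻¹ = a * g⁻¹ * a⁻¹ := by group
  rw [mm, h1, ← (conj_mono a).map_max]
  rfl

lemma pow_le_pow_of_le {a b : G} (h : a ≤ b) : ∀ n : ℕ, a ^ n ≤ b ^ n := by
  intro n; induction n with
  | zero => simp
  | succ k ih => rw [pow_succ, pow_succ]; exact mul_le_mul' ih h

def Cls (g h : G) : Prop := ∃ n : ℕ, h ≤ (mm g) ^ n ∧ h⁻¹ ≤ (mm g) ^ n

lemma cls_self (g : G) : Cls g g := ⟨1, by simpa using ⟨le_mm g, inv_le_mm g⟩⟩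

lemma cls_one (g : G) : Cls g 1 := ⟨0, by simp⟩

lemma cls_of_mm_le {g h : G} {n : ℕ} (h1 : mm h ≤ (mm g) ^ n) : Cls g h :=
  ⟨n, le_trans (le_mm h) h1, le_trans (inv_le_mm h) h1⟩

lemma mm_le_of_cls {g h : G} (h1 : Cls g h) : ∃ n : ℕ, mm h ≤ (mm g) ^ n := by
  obtain ⟨n, ha, hb⟩ := h1
  exact ⟨n, max_le ha hb⟩

lemma cls_trans {g h k : G} (h1 : Cls g h) (h2 : Cls h k) : Cls g k := by
  obtain ⟨m, hm⟩ := mm_le_of_cls h1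
  obtain ⟨n, ha, hb⟩ := h2
  refine ⟨n * m, ?_, ?_⟩
  · calc k ≤ (mm h) ^ n := ha
      _ ≤ ((mm g) ^ m) ^ n := pow_le_pow_of_le hm n
      _ = (mm g) ^ (n * m) := by rw [← pow_mul, mul_comm]
  · calc k⁻¹ ≤ (mm h) ^ n := hb
      _ ≤ ((mm g) ^ m) ^ n := pow_le_pow_of_le hm n
      _ = (mm g) ^ (n * m) := by rw [← pow_mul, mul_comm]

lemma cls_mono {u v h : G} {k : ℕ} (h1 : mm u ≤ (mm v) ^ k) (h2 : Cls u h) : Cls v h :=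
  cls_trans (cls_of_mm_le h1) h2

lemma cls_one_left {h : G} : Cls 1 h ↔ h = 1 := by
  constructor
  · rintro ⟨n, ha, hb⟩
    have hmm : mm (1 : G) = 1 := by simp [mm]
    rw [hmm, one_pow] at ha hb
    exact le_antisymm ha (Left.inv_le_one_iff.mp hb)
  · rintro rfl; exact cls_one 1

lemma cls_inv_left {g h : G} : Cls g⁻¹ h ↔ Cls g h := by
  unfold Cls; rw [mm_inv]

lemma cls_inv_right {g h : G} (h1 : Cls g h) : Cls g h⁻¹ := by
  obtain ⟨n, ha, hb⟩ := h1
  exact ⟨n, hb, by simpa using ha⟩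

lemma cls_total (g h : G) : Cls g h ∨ Cls h g := by
  by_cases hc : Cls g h
  · exact Or.inl hc
  · right
    have h1 : ¬ (h ≤ (mm g) ^ 1 ∧ h⁻¹ ≤ (mm g) ^ 1) := fun hx => hc ⟨1, hx⟩
    rw [pow_one] at h1
    have h2 : mm g < mm h := by
      rcases not_and_or.mp h1 with hx | hx
      · exact lt_of_lt_of_le (not_le.mp hx) (le_mm h)
      · exact lt_of_lt_of_le (not_le.mp hx) (inv_le_mm h)
    exact ⟨1, by rw [pow_one]; exact le_trans (le_mm g) h2.le,
           by rw [pow_one]; exact le_trans (by rw [← mm_inv]; exact le_mm g⁻¹) h2.le⟩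

lemma cls_mul_dom {w₁ w₂ h : G} (hc : Cls (w₁ * w₂) h) : Cls w₁ h ∨ Cls w₂ h := by
  rcases cls_total w₁ w₂ with hw | hw
  · left
    obtain ⟨n, hn⟩ := mm_le_of_cls hw
    have hb : mm (w₁ * w₂) ≤ (mm w₁) ^ (n + 1) := by
      have h1 : w₁ * w₂ ≤ mm w₁ * (mm w₁) ^ n :=
        mul_le_mul' (le_mm w₁) (le_trans (le_mm w₂) hn)
      have h2 : (w₁ * w₂)⁻¹ ≤ (mm w₁) ^ n * mm w₁ := by
        rw [mul_inv_rev]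
        exact mul_le_mul' (le_trans (inv_le_mm w₂) hn) (inv_le_mm w₁)
      refine max_le ?_ ?_
      · rw [pow_succ']; exact h1
      · rw [pow_succ]; exact h2
    exact cls_mono hb hc
  · right
    obtain ⟨n, hn⟩ := mm_le_of_cls hw
    have hb : mm (w₁ * w₂) ≤ (mm w₂) ^ (n + 1) := by
      have h1 : w₁ * w₂ ≤ (mm w₂) ^ n * mm w₂ :=
        mul_le_mul' (le_trans (le_mm w₁) hn) (le_mm w₂)
      have h2 : (w₁ * w₂)⁻¹ ≤ mm w₂ * (mm w₂) ^ n := by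
        rw [mul_inv_rev]
        exact mul_le_mul' (inv_le_mm w₂) (le_trans (inv_le_mm w₁) hn)
      refine max_le ?_ ?_
      · rw [pow_succ]; exact h1
      · rw [pow_succ']; exact h2
    exact cls_mono hb hc

lemma cls_conj_mpr {g h : G} (a : G) (hc : Cls g h) : Cls (a * g * a⁻¹) (a * h * a⁻¹) := by
  obtain ⟨n, ha, hb⟩ := hc
  refine ⟨n, ?_, ?_⟩
  · rw [mm_conj, conj_pow]
    exact conj_mono a ha
  · rw [mm_conj, conj_pow]
    have h1 : (a * h * a⁻¹)⁻¹ = a * h⁻¹ * a⁻¹ := by group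
    rw [h1]
    exact conj_mono a hb

lemma cls_conj {a g h : G} : Cls (a * g * a⁻¹) (a * h * a⁻¹) ↔ Cls g h := by
  constructor
  · intro hc
    have := cls_conj_mpr a⁻¹ hc
    have e1 : a⁻¹ * (a * g * a⁻¹) * a⁻¹⁻¹ = g := by group
    have e2 : a⁻¹ * (a * h * a⁻¹) * a⁻¹⁻¹ = h := by group
    rwa [e1, e2] at this
  · exact cls_conj_mpr a

/-- If `a ∈ C_k` then conjugation by `a` preserves `C_k`. -/
lemma cls_conj_self {k a : G} (hka : Cls k a) : ∀ h, Cls (a * k * a⁻¹) h ↔ Cls k h := by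
  -- Step 1 : C_{aka⁻¹} ⊆ C_k
  obtain ⟨m, hm⟩ := mm_le_of_cls hka
  have step1 : Cls k (a * k * a⁻¹) := by
    apply cls_of_mm_le (n := m + 1 + m)
    rw [mm_conj]
    calc a * mm k * a⁻¹ ≤ (mm k) ^ m * mm k * (mm k) ^ m := by
          refine mul_le_mul' (mul_le_mul' (le_trans (le_mm a) hm) le_rfl)
            (le_trans (inv_le_mm a) hm)
      _ = (mm k) ^ (m + 1 + m) := by rw [pow_add, pow_add, pow_one]
  -- Step 2 : a ∈ C_{aka⁻¹}
  have step2 : Cls (a * k * a⁻¹) a := by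
    have := cls_conj_mpr a hka
    have e : a * a * a⁻¹ = a := by group
    rwa [e] at this
  -- Step 3 : k ∈ C_{aka⁻¹}
  obtain ⟨p, hp⟩ := mm_le_of_cls step2
  have step3 : Cls (a * k * a⁻¹) k := by
    apply cls_of_mm_le (n := p + 1 + p)
    have e : k = a⁻¹ * (a * k * a⁻¹) * a := by group
    have e2 : mm k = a⁻¹ * mm (a * k * a⁻¹) * a := by
      conv_lhs => rw [e]
      have := mm_conj a⁻¹ (a * k * a⁻¹)
      rw [inv_inv] at this
      exact this
    rw [e2]
    set M := mm (a * k * a⁻¹)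
    calc a⁻¹ * M * a ≤ M ^ p * M * M ^ p := by
          refine mul_le_mul' (mul_le_mul' (le_trans (inv_le_mm a) hp) le_rfl)
            (le_trans (le_mm a) hp)
      _ = M ^ (p + 1 + p) := by rw [pow_add, pow_add, pow_one]
  intro h
  exact ⟨fun hh => cls_trans step1 hh, fun hh => cls_trans step3 hh⟩

/-- below-the-jump comparison: if `w ∉ D_{C_s}` (i.e. `Cls w s`), `w < 1`, and `u ∈ D_{C_s}`
(`¬ Cls u s`), then `w < u`. -/
lemma lt_of_cls_not_cls {w u s : G} (hw : Cls w s) (hw1 : w < 1) (hu : ¬ Cls u s) : w < u := by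
  by_contra hle
  push_neg at hle
  apply hu
  have h1 : mm w ≤ (mm u) ^ 1 := by
    rw [pow_one]
    have hwlt : w ≤ w⁻¹ := le_trans hw1.le (Left.one_le_inv_iff.mpr hw1.le)
    have : mm w = w⁻¹ := max_eq_right hwlt
    rw [this]
    calc w⁻¹ ≤ u⁻¹ := inv_le_inv_iff.mpr hle
      _ ≤ mm u := inv_le_mm u
  exact cls_mono h1 hw

end Core

section PartTwo
variable {G : Type*} [Group G] [LinearOrder G]
variable [MulLeftMono G] [MulRightMono G]

lemma cls_congr {s t w : G} (hst : Cls s t) (hts : Cls t s) : Cls w s ↔ Cls w t :=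
  ⟨fun h => cls_trans h hst, fun h => cls_trans h hts⟩

lemma notCls_mul {d e s : G} (hd : ¬ Cls d s) (he : ¬ Cls e s) : ¬ Cls (d * e) s := by
  intro h
  rcases cls_mul_dom h with h | h
  exacts [hd h, he h]

lemma notCls_inv {d s : G} (hd : ¬ Cls d s) : ¬ Cls d⁻¹ s := fun h => hd (cls_inv_left.mp h)

/-- coset shift: relating `w = x * y⁻¹` and `w' = x' * y'⁻¹` when `x*x'⁻¹, y*y'⁻¹ ∈ D`. -/
lemma coset_shift_cls {s d e w : G} (hd : ¬ Cls d s) (he : ¬ Cls e s) (hw : Cls w s) :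
    Cls (d⁻¹ * w * e) s := by
  by_contra hw'
  have : w = d * (d⁻¹ * w * e) * e⁻¹ := by group
  rw [this] at hw
  rcases cls_mul_dom hw with h | h
  · rcases cls_mul_dom h with h | h
    exacts [hd h, hw' h]
  · exact notCls_inv he h

lemma coset_shift_lt {s d e w : G} (hd : ¬ Cls d s) (he : ¬ Cls e s) (hw : Cls w s)
    (hw1 : w < 1) : d⁻¹ * w * e < 1 := by
  have h1 : w < d * e⁻¹ :=
    lt_of_cls_not_cls hw hw1 (notCls_mul hd (notCls_inv he))
  calc d⁻¹ * w * e < d⁻¹ * (d * e⁻¹) * e := by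
        exact mul_lt_mul_left (mul_lt_mul_right h1 d⁻¹) e
    _ = 1 := by group

variable (G) in
/-- points: (seed s, coset representative x, rational fiber q) -/
abbrev Pre := {g : G // g ≠ 1} × G × ℚ

/-- two points are identified iff the seeds generate the same convex subgroup, the
representatives are in the same right coset of `D`, and the fibers agree. -/
def prel (a b : Pre G) : Prop :=
  (Cls a.1.1 b.1.1 ∧ Cls b.1.1 a.1.1) ∧ ¬ Cls (a.2.1 * b.2.1⁻¹) a.1.1 ∧ a.2.2 = b.2.2

lemma prel_refl (a : Pre G) : prel a a := by
  refine ⟨⟨cls_self _, cls_self _⟩, ?_, rfl⟩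
  rw [mul_inv_cancel]
  intro h
  exact a.1.2 (cls_one_left.mp h)

lemma prel_symm {a b : Pre G} (h : prel a b) : prel b a := by
  obtain ⟨⟨h1, h2⟩, hD, hq⟩ := h
  refine ⟨⟨h2, h1⟩, ?_, hq.symm⟩
  intro hc
  apply hD
  have hc' : Cls (b.2.1 * a.2.1⁻¹) a.1.1 := cls_trans hc h2
  have hc'' : Cls ((b.2.1 * a.2.1⁻¹)⁻¹) a.1.1 := cls_inv_left.mpr hc'
  have e : (b.2.1 * a.2.1⁻¹)⁻¹ = a.2.1 * b.2.1⁻¹ := by group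
  rwa [e] at hc''

lemma prel_trans {a b c : Pre G} (hab : prel a b) (hbc : prel b c) : prel a c := by
  obtain ⟨⟨h1, h2⟩, hD, hq⟩ := hab
  obtain ⟨⟨h3, h4⟩, hD', hq'⟩ := hbc
  refine ⟨⟨cls_trans h1 h3, cls_trans h4 h2⟩, ?_, hq.trans hq'⟩
  have e : a.2.1 * c.2.1⁻¹ = (a.2.1 * b.2.1⁻¹) * (b.2.1 * c.2.1⁻¹) := by group
  rw [e]
  exact notCls_mul hD (fun hc => hD' (cls_trans hc h1))

variable (G) in
def preSetoid : Setoid (Pre G) :=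
  ⟨prel, prel_refl, prel_symm, prel_trans⟩

/-- the strict order on points. -/
def prelt (a b : Pre G) : Prop :=
  (Cls b.1.1 a.1.1 ∧ ¬ Cls a.1.1 b.1.1) ∨
  ((Cls a.1.1 b.1.1 ∧ Cls b.1.1 a.1.1) ∧
    ((Cls (a.2.1 * b.2.1⁻¹) a.1.1 ∧ a.2.1 * b.2.1⁻¹ < 1) ∨
     (¬ Cls (a.2.1 * b.2.1⁻¹) a.1.1 ∧ a.2.2 < b.2.2)))

lemma prelt_irrefl {a b : Pre G} (hab : prel a b) : ¬ prelt a b := by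
  obtain ⟨⟨h1, h2⟩, hD, hq⟩ := hab
  rintro (⟨h3, h4⟩ | ⟨-, (⟨h5, -⟩ | ⟨-, h6⟩)⟩)
  · exact h4 h1
  · exact hD h5
  · exact absurd hq (ne_of_lt h6)

lemma prelt_congr_right {a b b' : Pre G} (hb : prel b b') (h : prelt a b) : prelt a b' := by
  obtain ⟨⟨hc1, hc2⟩, hDb, hqb⟩ := hb
  rcases h with ⟨h1, h2⟩ | ⟨⟨h3, h4⟩, hcase⟩
  · exact Or.inl ⟨cls_trans hc2 h1, fun hc => h2 (cls_trans hc hc2)⟩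
  · refine Or.inr ⟨⟨cls_trans h3 hc1, cls_trans hc2 h4⟩, ?_⟩
    have hDb' : ¬ Cls (b.2.1 * b'.2.1⁻¹) a.1.1 := by
      intro hc; exact hDb (cls_trans hc h3)
    have hone : ¬ Cls (1 : G) a.1.1 := by
      intro hc; exact a.1.2 (cls_one_left.mp hc)
    rcases hcase with ⟨h5, h6⟩ | ⟨h5, h6⟩
    · left
      constructor
      · have h := coset_shift_cls hone hDb' h5
        have e : (1 : G)⁻¹ * (a.2.1 * b.2.1⁻¹) * (b.2.1 * b'.2.1⁻¹) = a.2.1 * b'.2.1⁻¹ := by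
          group
        rwa [e] at h
      · have h := coset_shift_lt hone hDb' h5 h6
        have e : (1 : G)⁻¹ * (a.2.1 * b.2.1⁻¹) * (b.2.1 * b'.2.1⁻¹) = a.2.1 * b'.2.1⁻¹ := by
          group
        rwa [e] at h
    · right
      constructor
      · intro hc
        apply h5
        have h := coset_shift_cls hone (notCls_inv hDb') hc
        have e : (1 : G)⁻¹ * (a.2.1 * b'.2.1⁻¹) * (b.2.1 * b'.2.1⁻¹)⁻¹ = a.2.1 * b.2.1⁻¹ := by
          group
        rwa [e] at h
      · rw [← hqb]; exact h6

lemma prelt_congr_left {a a' b : Pre G} (ha : prel a a') (h : prelt a b) : prelt a' b := by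
  obtain ⟨⟨hc1, hc2⟩, hDa, hqa⟩ := ha
  rcases h with ⟨h1, h2⟩ | ⟨⟨h3, h4⟩, hcase⟩
  · exact Or.inl ⟨cls_trans h1 hc1, fun hc => h2 (cls_trans hc1 hc)⟩
  · refine Or.inr ⟨⟨cls_trans hc2 h3, cls_trans h4 hc1⟩, ?_⟩
    have hone : ¬ Cls (1 : G) a.1.1 := by
      intro hc; exact a.1.2 (cls_one_left.mp hc)
    -- transfer the seed from a to a' : Cls w a.1.1 ↔ Cls w a'.1.1
    have seed : ∀ w : G, Cls w a.1.1 → Cls w a'.1.1 := fun w h => cls_trans h hc1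
    have seed' : ∀ w : G, Cls w a'.1.1 → Cls w a.1.1 := fun w h => cls_trans h hc2
    rcases hcase with ⟨h5, h6⟩ | ⟨h5, h6⟩
    · left
      constructor
      · have h := coset_shift_cls hDa hone h5
        have e : (a.2.1 * a'.2.1⁻¹)⁻¹ * (a.2.1 * b.2.1⁻¹) * 1 = a'.2.1 * b.2.1⁻¹ := by group
        rw [e] at h
        exact seed _ h
      · have h := coset_shift_lt hDa hone h5 h6
        have e : (a.2.1 * a'.2.1⁻¹)⁻¹ * (a.2.1 * b.2.1⁻¹) * 1 = a'.2.1 * b.2.1⁻¹ := by group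
        rwa [e] at h
    · right
      constructor
      · intro hc
        apply h5
        have hc' := seed' _ hc
        have h := coset_shift_cls (notCls_inv hDa) hone hc'
        have e : (a.2.1 * a'.2.1⁻¹)⁻¹⁻¹ * (a'.2.1 * b.2.1⁻¹) * 1 = a.2.1 * b.2.1⁻¹ := by group
        rwa [e] at h
      · rw [← hqa]; exact h6

lemma prelt_trans {a b c : Pre G} (hab : prelt a b) (hbc : prelt b c) : prelt a c := by
  rcases hab with ⟨h1, h2⟩ | ⟨⟨h3, h4⟩, hcase⟩
  · rcases hbc with ⟨h5, h6⟩ | ⟨⟨h7, h8⟩, -⟩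
    · exact Or.inl ⟨cls_trans h5 h1, fun hc => h6 (cls_trans h1 hc)⟩
    · exact Or.inl ⟨cls_trans h8 h1, fun hc => h2 (cls_trans hc h8)⟩
  · rcases hbc with ⟨h5, h6⟩ | ⟨⟨h7, h8⟩, hcase'⟩
    · exact Or.inl ⟨cls_trans h5 h4, fun hc => h6 (cls_trans h4 hc)⟩
    · refine Or.inr ⟨⟨cls_trans h3 h7, cls_trans h8 h4⟩, ?_⟩
      have e : a.2.1 * c.2.1⁻¹ = (a.2.1 * b.2.1⁻¹) * (b.2.1 * c.2.1⁻¹) := by group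
      -- transfer the class references of the second to a.1.1
      rcases hcase with ⟨p1, p2⟩ | ⟨p1, p2⟩ <;> rcases hcase' with ⟨q1, q2⟩ | ⟨q1, q2⟩
      · -- coset, coset
        left
        constructor
        · rw [e]
          set w1 := a.2.1 * b.2.1⁻¹
          set w2 := b.2.1 * c.2.1⁻¹
          have h1' : mm w1 ≤ mm (w1 * w2) ^ 1 := by
            rw [pow_one]
            have hmm1 : mm w1 = w1⁻¹ :=
              max_eq_right (le_trans p2.le (Left.one_le_inv_iff.mpr p2.le))
            rw [hmm1]
            calc w1⁻¹ = 1 * w1⁻¹ := (one_mul _).symm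
              _ ≤ w2⁻¹ * w1⁻¹ := mul_le_mul_left (Left.one_le_inv_iff.mpr q2.le) w1⁻¹
              _ = (w1 * w2)⁻¹ := (mul_inv_rev w1 w2).symm
              _ ≤ mm (w1 * w2) := inv_le_mm _
          exact cls_mono h1' p1
        · rw [e]
          calc (a.2.1 * b.2.1⁻¹) * (b.2.1 * c.2.1⁻¹) < 1 * (b.2.1 * c.2.1⁻¹) :=
                mul_lt_mul_left p2 _
            _ = b.2.1 * c.2.1⁻¹ := one_mul _
            _ < 1 := q2
      · -- coset, fiber : w₂ ∈ D
        left
        have q1' : ¬ Cls (b.2.1 * c.2.1⁻¹) a.1.1 := fun hc => q1 (cls_trans hc h3)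
        constructor
        · rw [e]
          by_contra hw
          have e2 : a.2.1 * b.2.1⁻¹ = (a.2.1 * c.2.1⁻¹) * (b.2.1 * c.2.1⁻¹)⁻¹ := by group
          rw [e2] at p1
          rcases cls_mul_dom p1 with h | h
          · rw [← e] at hw; exact hw h
          · exact notCls_inv q1' h
        · rw [e]
          have h1 : a.2.1 * b.2.1⁻¹ < (b.2.1 * c.2.1⁻¹)⁻¹ :=
            lt_of_cls_not_cls p1 p2 (notCls_inv q1')
          calc (a.2.1 * b.2.1⁻¹) * (b.2.1 * c.2.1⁻¹)
              < (b.2.1 * c.2.1⁻¹)⁻¹ * (b.2.1 * c.2.1⁻¹) := mul_lt_mul_left h1 _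
            _ = 1 := by group
      · -- fiber, coset : w₁ ∈ D
        left
        have q1' : Cls (b.2.1 * c.2.1⁻¹) a.1.1 := cls_trans q1 h4
        constructor
        · rw [e]
          by_contra hw
          have e2 : b.2.1 * c.2.1⁻¹ = (a.2.1 * b.2.1⁻¹)⁻¹ * (a.2.1 * c.2.1⁻¹) := by group
          rw [e2] at q1'
          rcases cls_mul_dom q1' with h | h
          · exact notCls_inv p1 h
          · rw [← e] at hw; exact hw h
        · rw [e]
          have h1 : b.2.1 * c.2.1⁻¹ < (a.2.1 * b.2.1⁻¹)⁻¹ :=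
            lt_of_cls_not_cls q1' q2 (notCls_inv p1)
          calc (a.2.1 * b.2.1⁻¹) * (b.2.1 * c.2.1⁻¹)
              < (a.2.1 * b.2.1⁻¹) * (a.2.1 * b.2.1⁻¹)⁻¹ := mul_lt_mul_right h1 _
            _ = 1 := by group
      · -- fiber, fiber
        right
        have q1' : ¬ Cls (b.2.1 * c.2.1⁻¹) a.1.1 := fun hc => q1 (cls_trans hc h3)
        constructor
        · rw [e]; exact notCls_mul p1 q1'
        · exact lt_trans p2 q2

lemma prelt_total (a b : Pre G) : prel a b ∨ prelt a b ∨ prelt b a := by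
  by_cases hab : Cls a.1.1 b.1.1
  · by_cases hba : Cls b.1.1 a.1.1
    · -- same class
      by_cases h3 : Cls (a.2.1 * b.2.1⁻¹) a.1.1
      · have hne : a.2.1 * b.2.1⁻¹ ≠ 1 := by
          intro hc; rw [hc] at h3; exact a.1.2 (cls_one_left.mp h3)
        rcases lt_trichotomy (a.2.1 * b.2.1⁻¹) 1 with h4 | h4 | h4
        · exact Or.inr (Or.inl (Or.inr ⟨⟨hab, hba⟩, Or.inl ⟨h3, h4⟩⟩))
        · exact absurd h4 hne
        · refine Or.inr (Or.inr (Or.inr ⟨⟨hba, hab⟩, Or.inl ⟨?_, ?_⟩⟩))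
          · have h5 : Cls ((a.2.1 * b.2.1⁻¹)⁻¹) b.1.1 :=
              cls_trans (cls_inv_left.mpr h3) hab
            have e : (a.2.1 * b.2.1⁻¹)⁻¹ = b.2.1 * a.2.1⁻¹ := by group
            rwa [e] at h5
          · have h5 : (a.2.1 * b.2.1⁻¹)⁻¹ < 1 := Left.inv_lt_one_iff.mpr h4
            have e : (a.2.1 * b.2.1⁻¹)⁻¹ = b.2.1 * a.2.1⁻¹ := by group
            rwa [e] at h5
      · rcases lt_trichotomy a.2.2 b.2.2 with h4 | h4 | h4
        · exact Or.inr (Or.inl (Or.inr ⟨⟨hab, hba⟩, Or.inr ⟨h3, h4⟩⟩))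
        · exact Or.inl ⟨⟨hab, hba⟩, h3, h4⟩
        · refine Or.inr (Or.inr (Or.inr ⟨⟨hba, hab⟩, Or.inr ⟨?_, h4⟩⟩))
          intro hc
          apply h3
          have h5 : Cls ((b.2.1 * a.2.1⁻¹)⁻¹) a.1.1 :=
            cls_inv_left.mpr (cls_trans hc hba)
          have e : (b.2.1 * a.2.1⁻¹)⁻¹ = a.2.1 * b.2.1⁻¹ := by group
          rwa [e] at h5
    · -- C_b ⊊ C_a : b is strictly lower
      exact Or.inr (Or.inr (Or.inl ⟨hab, hba⟩))
  · -- then Cls b a must hold, C_a ⊊ C_b : a strictly lower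
    have hba : Cls b.1.1 a.1.1 := (cls_total a.1.1 b.1.1).resolve_left hab
    exact Or.inr (Or.inl (Or.inl ⟨hba, hab⟩))

end PartTwo

section PartThree
variable {G : Type*} [Group G] [LinearOrder G]
variable [MulLeftMono G] [MulRightMono G]

variable (G) in
def Pt := Quotient (preSetoid G)

def Pt.mk (a : Pre G) : Pt G := Quotient.mk (preSetoid G) a

lemma prelt_liftable (a₁ b₁ a₂ b₂ : Pre G) (ha : prel a₁ a₂) (hb : prel b₁ b₂) :
    prelt a₁ b₁ = prelt a₂ b₂ := by
  apply propext
  constructor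
  · intro h
    exact prelt_congr_right hb (prelt_congr_left ha h)
  · intro h
    exact prelt_congr_right (prel_symm hb) (prelt_congr_left (prel_symm ha) h)

def pltRel : Pt G → Pt G → Prop :=
  Quotient.lift₂ prelt (fun a₁ b₁ a₂ b₂ ha hb => prelt_liftable a₁ b₁ a₂ b₂ ha hb)

lemma pltRel_mk {a b : Pre G} : pltRel (Pt.mk a) (Pt.mk b) ↔ prelt a b := Iff.rfl

instance : IsTrans (Pt G) pltRel := by
  constructor
  intro x y z
  induction x using Quotient.ind
  induction y using Quotient.ind
  induction z using Quotient.ind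
  exact prelt_trans

instance : IsIrrefl (Pt G) pltRel := by
  constructor
  intro x
  induction x using Quotient.ind with | _ a =>
  exact prelt_irrefl (prel_refl a)

instance : IsTrichotomous (Pt G) pltRel := by
  constructor
  intro x y
  induction x using Quotient.ind with | _ a =>
  induction y using Quotient.ind with | _ b =>
  intro h1 h2
  rcases prelt_total a b with h | h | h
  · exact Quotient.sound h
  · exact absurd h h1
  · exact absurd h h2

instance : IsStrictTotalOrder (Pt G) pltRel := {}

noncomputable instance : LinearOrder (Pt G) :=
  letI := fun (a b : Pt G) => Classical.dec (pltRel a b)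
  linearOrderOfSTO pltRel

lemma pt_lt_iff {a b : Pre G} : Pt.mk a < Pt.mk b ↔ prelt a b := Iff.rfl

-- the action
def pmap (g : G) (a : Pre G) : Pre G :=
  (⟨g * a.1.1 * g⁻¹, fun hc => a.1.2 (by
      have e : a.1.1 = g⁻¹ * (g * a.1.1 * g⁻¹) * g := by group
      rw [e, hc]; group)⟩, g * a.2.1, a.2.2)

lemma prel_pmap (g : G) {a b : Pre G} (h : prel a b) : prel (pmap g a) (pmap g b) := by
  obtain ⟨⟨h1, h2⟩, hD, hq⟩ := h
  refine ⟨⟨?_, ?_⟩, ?_, hq⟩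
  · exact cls_conj_mpr g h1
  · exact cls_conj_mpr g h2
  · intro hc
    apply hD
    have e : (g * a.2.1) * (g * b.2.1)⁻¹ = g * (a.2.1 * b.2.1⁻¹) * g⁻¹ := by group
    rw [show (pmap g a).2.1 * (pmap g b).2.1⁻¹ = (g * a.2.1) * (g * b.2.1)⁻¹ from rfl, e] at hc
    exact cls_conj.mp hc

def pact (g : G) : Pt G → Pt G :=
  Quotient.map (pmap g) (fun a b h => prel_pmap g h)

lemma pact_mk (g : G) (a : Pre G) : pact g (Pt.mk a) = Pt.mk (pmap g a) := rfl

lemma pact_pact (g h : G) (x : Pt G) : pact g (pact h x) = pact (g * h) x := by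
  induction x using Quotient.ind with | _ a =>
  apply Quotient.sound
  have e1 : g * (h * a.1.1 * h⁻¹) * g⁻¹ = (g * h) * a.1.1 * (g * h)⁻¹ := by group
  have e2 : g * (h * a.2.1) = (g * h) * a.2.1 := by group
  refine ⟨⟨?_, ?_⟩, ?_, rfl⟩
  · rw [show (pmap g (pmap h a)).1.1 = g * (h * a.1.1 * h⁻¹) * g⁻¹ from rfl, e1]
    exact cls_self _
  · rw [show (pmap g (pmap h a)).1.1 = g * (h * a.1.1 * h⁻¹) * g⁻¹ from rfl, e1]
    exact cls_self _
  · rw [show (pmap g (pmap h a)).2.1 = g * (h * a.2.1) from rfl, e2]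
    rw [show (pmap (g * h) a).2.1 = (g * h) * a.2.1 from rfl]
    rw [mul_inv_cancel]
    intro hc
    exact (pmap g (pmap h a)).1.2 (cls_one_left.mp hc)

lemma pact_one (x : Pt G) : pact 1 x = x := by
  induction x using Quotient.ind with | _ a =>
  apply Quotient.sound
  refine ⟨⟨?_, ?_⟩, ?_, rfl⟩
  · rw [show (pmap 1 a).1.1 = 1 * a.1.1 * 1⁻¹ from rfl]
    rw [show (1:G) * a.1.1 * 1⁻¹ = a.1.1 by group]
    exact cls_self _
  · rw [show (pmap 1 a).1.1 = 1 * a.1.1 * 1⁻¹ from rfl]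
    rw [show (1:G) * a.1.1 * 1⁻¹ = a.1.1 by group]
    exact cls_self _
  · rw [show (pmap 1 a).2.1 = 1 * a.2.1 from rfl]
    rw [show (1:G) * a.2.1 * a.2.1⁻¹ = 1 by group]
    intro hc
    exact (pmap 1 a).1.2 (cls_one_left.mp hc)

lemma pact_strictMono (g : G) {x y : Pt G} (h : x < y) : pact g x < pact g y := by
  induction x using Quotient.ind with | _ a =>
  induction y using Quotient.ind with | _ b =>
  replace h : prelt a b := h
  show prelt (pmap g a) (pmap g b)
  rcases h with ⟨h1, h2⟩ | ⟨⟨h3, h4⟩, hcase⟩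
  · left
    constructor
    · have := cls_conj_mpr g h1
      exact this
    · intro hc
      exact h2 (cls_conj.mp hc)
  · right
    refine ⟨⟨cls_conj_mpr g h3, cls_conj_mpr g h4⟩, ?_⟩
    have e : (g * a.2.1) * (g * b.2.1)⁻¹ = g * (a.2.1 * b.2.1⁻¹) * g⁻¹ := by group
    rcases hcase with ⟨h5, h6⟩ | ⟨h5, h6⟩
    · left
      constructor
      · rw [show (pmap g a).2.1 * (pmap g b).2.1⁻¹ = (g * a.2.1) * (g * b.2.1)⁻¹ from rfl, e]
        exact cls_conj_mpr g h5
      · rw [show (pmap g a).2.1 * (pmap g b).2.1⁻¹ = (g * a.2.1) * (g * b.2.1)⁻¹ from rfl, e]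
        have : g * (a.2.1 * b.2.1⁻¹) * g⁻¹ < g * 1 * g⁻¹ := conj_lt_conj_iff.mpr h6
        simpa using this
    · right
      constructor
      · rw [show (pmap g a).2.1 * (pmap g b).2.1⁻¹ = (g * a.2.1) * (g * b.2.1)⁻¹ from rfl, e]
        intro hc
        exact h5 (cls_conj.mp hc)
      · exact h6

end PartThree

section PartFour
variable {G : Type*} [Group G] [LinearOrder G]
variable [MulLeftMono G] [MulRightMono G]

lemma pact_fix {g : G} {a : Pre G} (hgs : ¬ Cls g a.1.1) : pact g (Pt.mk a) = Pt.mk a := by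
  apply Quotient.sound
  have hsg : Cls a.1.1 g := (cls_total g a.1.1).resolve_left hgs
  have hiff := cls_conj_self (k := a.1.1) (a := g) hsg
  refine ⟨⟨?_, ?_⟩, ?_, rfl⟩
  · exact (hiff a.1.1).mpr (cls_self _)
  · exact (hiff _).mp (cls_self _)
  · show ¬ Cls ((g * a.2.1) * a.2.1⁻¹) (g * a.1.1 * g⁻¹)
    have e : (g * a.2.1) * a.2.1⁻¹ = g := by group
    rw [e]
    intro hc
    apply hgs
    have hc2 := (cls_conj (a := g⁻¹)).mpr hc
    rwa [show g⁻¹ * g * g⁻¹⁻¹ = g by group,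
        show g⁻¹ * (g * a.1.1 * g⁻¹) * g⁻¹⁻¹ = a.1.1 by group] at hc2

lemma pact_move_up {g : G} {a : Pre G} (hsg : Cls a.1.1 g) (hgs : Cls g a.1.1)
    (hg : 1 < g) : Pt.mk a < pact g (Pt.mk a) := by
  show prelt a (pmap g a)
  have hiff := cls_conj_self (k := a.1.1) (a := g) hsg
  right
  refine ⟨⟨(hiff _).mp (cls_self _), (hiff a.1.1).mpr (cls_self _)⟩, ?_⟩
  left
  constructor
  · show Cls (a.2.1 * (g * a.2.1)⁻¹) a.1.1
    have e : a.2.1 * (g * a.2.1)⁻¹ = g⁻¹ := by group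
    rw [e]
    exact cls_inv_left.mpr hgs
  · show a.2.1 * (g * a.2.1)⁻¹ < 1
    have e : a.2.1 * (g * a.2.1)⁻¹ = g⁻¹ := by group
    rw [e]
    exact Left.inv_lt_one_iff.mpr hg

/-- base points -/
def bpt (g : G) (hg : g ≠ 1) (q : ℚ) : Pt G := Pt.mk (⟨g, hg⟩, 1, q)

lemma bpt_lt {g : G} {hg : g ≠ 1} {q q' : ℚ} (h : q < q') : bpt g hg q < bpt g hg q' := by
  show prelt _ _
  right
  refine ⟨⟨cls_self _, cls_self _⟩, Or.inr ⟨?_, h⟩⟩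
  show ¬ Cls ((1 : G) * (1 : G)⁻¹) g
  rw [show (1 : G) * (1:G)⁻¹ = 1 by group]
  intro hc
  exact hg (cls_one_left.mp hc)

lemma cls_of_base_le {g : G} {hg : g ≠ 1} {a : Pre G}
    (h : ¬ (Pt.mk a < bpt g hg 0)) : Cls a.1.1 g := by
  by_contra hc
  apply h
  have h1 : Cls g a.1.1 := (cls_total a.1.1 g).resolve_left hc
  exact Or.inl ⟨h1, hc⟩

lemma up_of_base_le {g : G} (hg : 1 < g) (x : Pt G)
    (hx : bpt g hg.ne' 0 ≤ x) : x ≤ pact g x := by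
  induction x using Quotient.ind with | _ a =>
  have hsg : Cls a.1.1 g := cls_of_base_le (not_lt.mpr hx)
  by_cases hgs : Cls g a.1.1
  · exact le_of_lt (pact_move_up hsg hgs hg)
  · exact le_of_eq (pact_fix hgs).symm

lemma fix_of_base_le {g h : G} {hg : g ≠ 1} (hgh : ¬ Cls h g) (x : Pt G)
    (hx : bpt g hg 0 ≤ x) : pact h x = x := by
  induction x using Quotient.ind with | _ a =>
  have hsg : Cls a.1.1 g := cls_of_base_le (not_lt.mpr hx)
  apply pact_fix
  intro hc
  exact hgh (cls_trans hc hsg)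

lemma moved_lt_base {g h : G} {hg : g ≠ 1} (hgh : ¬ Cls h g) (x : Pt G)
    (hmv : pact h x ≠ x) : pact h x < bpt g hg 0 ∧ x < bpt g hg 0 := by
  induction x using Quotient.ind with | _ a =>
  have hCls : Cls h a.1.1 := by
    by_contra hc
    exact hmv (pact_fix hc)
  have hClsg : Cls g h := (cls_total h g).resolve_left hgh
  constructor
  · show prelt (pmap h a) _
    left
    have h1 : Cls h (h * a.1.1 * h⁻¹) := by
      have := cls_conj_mpr h hCls
      rwa [show h * h * h⁻¹ = h by group] at this
    constructor
    · exact cls_trans hClsg h1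
    · intro hc
      exact hgh (cls_trans h1 hc)
  · show prelt a _
    left
    exact ⟨cls_trans hClsg hCls, fun hc => hgh (cls_trans hCls hc)⟩

lemma base_moves {g : G} (hg : 1 < g) (q : ℚ) :
    bpt g hg.ne' q < pact g (bpt g hg.ne' q) :=
  pact_move_up (cls_self g) (cls_self g) hg

instance [Countable G] : Countable (Pt G) := Quotient.countable

instance : DenselyOrdered (Pt G) := by
  constructor
  intro x y h
  induction x using Quotient.ind with | _ a =>
  induction y using Quotient.ind with | _ b =>
  replace h : prelt a b := h
  have hone : ¬ Cls ((1:G)) a.1.1 := fun hc => a.1.2 (cls_one_left.mp hc)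
  have hself : ¬ Cls (a.2.1 * a.2.1⁻¹) a.1.1 := by
    rw [mul_inv_cancel]; exact hone
  rcases h with hcl | ⟨hsame, hco | hfi⟩
  · refine ⟨Pt.mk (a.1, a.2.1, a.2.2 + 1), ?_, ?_⟩
    · show prelt _ _
      exact Or.inr ⟨⟨cls_self _, cls_self _⟩, Or.inr ⟨hself, by show a.2.2 < a.2.2 + 1; linarith⟩⟩
    · show prelt _ _
      exact Or.inl hcl
  · refine ⟨Pt.mk (a.1, a.2.1, a.2.2 + 1), ?_, ?_⟩
    · show prelt _ _
      exact Or.inr ⟨⟨cls_self _, cls_self _⟩, Or.inr ⟨hself, by show a.2.2 < a.2.2 + 1; linarith⟩⟩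
    · show prelt _ _
      exact Or.inr ⟨hsame, Or.inl hco⟩
  · refine ⟨Pt.mk (a.1, a.2.1, (a.2.2 + b.2.2) / 2), ?_, ?_⟩
    · show prelt _ _
      exact Or.inr ⟨⟨cls_self _, cls_self _⟩, Or.inr ⟨hself, by
        obtain ⟨-, hq⟩ := hfi; show a.2.2 < (a.2.2 + b.2.2) / 2; linarith⟩⟩
    · show prelt _ _
      refine Or.inr ⟨hsame, Or.inr ⟨hfi.1, by obtain ⟨-, hq⟩ := hfi; show (a.2.2 + b.2.2)/2 < b.2.2; linarith⟩⟩

instance : NoMaxOrder (Pt G) := by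
  constructor
  intro x
  induction x using Quotient.ind with | _ a =>
  refine ⟨Pt.mk (a.1, a.2.1, a.2.2 + 1), ?_⟩
  show prelt _ _
  refine Or.inr ⟨⟨cls_self _, cls_self _⟩, Or.inr ⟨?_, by show a.2.2 < a.2.2 + 1; linarith⟩⟩
  rw [mul_inv_cancel]
  exact fun hc => a.1.2 (cls_one_left.mp hc)

instance : NoMinOrder (Pt G) := by
  constructor
  intro x
  induction x using Quotient.ind with | _ a =>
  refine ⟨Pt.mk (a.1, a.2.1, a.2.2 - 1), ?_⟩
  show prelt _ _
  refine Or.inr ⟨⟨cls_self _, cls_self _⟩, Or.inr ⟨?_, by show a.2.2 - 1 < a.2.2; linarith⟩⟩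
  rw [mul_inv_cancel]
  exact fun hc => a.1.2 (cls_one_left.mp hc)

end PartFour

section PartFive

noncomputable def Fr (φ : ℚ ≃o ℚ) : ℝ → ℝ := fun x =>
  sSup ((fun q : ℚ => ((φ q : ℚ) : ℝ)) '' {q : ℚ | (q : ℝ) ≤ x})

lemma Fr_set_nonempty (φ : ℚ ≃o ℚ) (x : ℝ) :
    ((fun q : ℚ => ((φ q : ℚ) : ℝ)) '' {q : ℚ | (q : ℝ) ≤ x}).Nonempty := by
  obtain ⟨q, hq⟩ := exists_rat_lt x
  exact ⟨_, ⟨q, le_of_lt hq, rfl⟩⟩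

lemma Fr_set_bddAbove (φ : ℚ ≃o ℚ) (x : ℝ) :
    BddAbove ((fun q : ℚ => ((φ q : ℚ) : ℝ)) '' {q : ℚ | (q : ℝ) ≤ x}) := by
  obtain ⟨q', hq'⟩ := exists_rat_gt x
  refine ⟨((φ q' : ℚ) : ℝ), ?_⟩
  rintro y ⟨q, hq, rfl⟩
  have : q < q' := by
    have := lt_of_le_of_lt hq hq'
    exact_mod_cast this
  have h2 : φ q ≤ φ q' := le_of_lt (φ.lt_iff_lt.mpr this)
  show ((φ q : ℚ) : ℝ) ≤ ((φ q' : ℚ) : ℝ)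
  exact_mod_cast h2

lemma le_Fr (φ : ℚ ≃o ℚ) {x : ℝ} {q : ℚ} (hq : (q : ℝ) ≤ x) : ((φ q : ℚ) : ℝ) ≤ Fr φ x :=
  le_csSup (Fr_set_bddAbove φ x) ⟨q, hq, rfl⟩

lemma Fr_le (φ : ℚ ≃o ℚ) {x c : ℝ} (h : ∀ q : ℚ, (q : ℝ) ≤ x → ((φ q : ℚ) : ℝ) ≤ c) :
    Fr φ x ≤ c := by
  apply csSup_le (Fr_set_nonempty φ x)
  rintro y ⟨q, hq, rfl⟩
  exact h q hq

lemma Fr_strictMono (φ : ℚ ≃o ℚ) : StrictMono (Fr φ) := by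
  intro x y hxy
  obtain ⟨q₁, h1, h2⟩ := exists_rat_btwn hxy
  obtain ⟨q₂, h3, h4⟩ := exists_rat_btwn h2
  have hq : q₁ < q₂ := by exact_mod_cast h3
  calc Fr φ x ≤ ((φ q₁ : ℚ) : ℝ) := by
        apply Fr_le
        intro q hq'
        have : q < q₁ := by exact_mod_cast lt_of_le_of_lt hq' h1
        have : φ q ≤ φ q₁ := le_of_lt (φ.lt_iff_lt.mpr this)
        exact_mod_cast this
    _ < ((φ q₂ : ℚ) : ℝ) := by exact_mod_cast φ.lt_iff_lt.mpr hq
    _ ≤ Fr φ y := le_Fr φ (le_of_lt h4)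

lemma Fr_comp (φ ψ : ℚ ≃o ℚ) (x : ℝ) : Fr φ (Fr ψ x) = Fr (ψ.trans φ) x := by
  apply le_antisymm
  · apply Fr_le
    intro q hq
    by_cases hc : ((ψ.symm q : ℚ) : ℝ) ≤ x
    · have : ((φ q : ℚ) : ℝ) = (((ψ.trans φ) (ψ.symm q) : ℚ) : ℝ) := by
        simp [OrderIso.trans_apply]
      rw [this]
      exact le_Fr (ψ.trans φ) hc
    · exfalso
      push_neg at hc
      obtain ⟨e₁, he1, he2⟩ := exists_rat_btwn hc
      have hlt : ψ e₁ < q := by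
        have : e₁ < ψ.symm q := by exact_mod_cast he2
        have := ψ.lt_iff_lt.mpr this
        simpa using this
      have hub : Fr ψ x ≤ ((ψ e₁ : ℚ) : ℝ) := by
        apply Fr_le
        intro e he
        have : e < e₁ := by exact_mod_cast lt_of_le_of_lt he he1
        have : ψ e ≤ ψ e₁ := le_of_lt (ψ.lt_iff_lt.mpr this)
        exact_mod_cast this
      have : (q : ℝ) ≤ ((ψ e₁ : ℚ) : ℝ) := le_trans hq hub
      have : (q : ℚ) ≤ ψ e₁ := by exact_mod_cast this
      exact absurd hlt (not_lt.mpr this)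
  · apply Fr_le
    intro q hq
    have h1 : ((ψ q : ℚ) : ℝ) ≤ Fr ψ x := le_Fr ψ hq
    have := le_Fr φ (x := Fr ψ x) (q := ψ q) h1
    simpa [OrderIso.trans_apply] using this

lemma Fr_id (x : ℝ) : Fr (OrderIso.refl ℚ) x = x := by
  apply le_antisymm
  · apply Fr_le
    intro q hq
    simpa using hq
  · apply le_of_forall_lt
    intro z hz
    obtain ⟨q, h1, h2⟩ := exists_rat_btwn hz
    calc z < (q : ℝ) := h1
      _ = ((OrderIso.refl ℚ q : ℚ) : ℝ) := by simp
      _ ≤ Fr (OrderIso.refl ℚ) x := le_Fr _ (le_of_lt h2)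

/-- canonical extension of an order automorphism of `ℚ` to one of `ℝ`. -/
noncomputable def FrIso (φ : ℚ ≃o ℚ) : ℝ ≃o ℝ where
  toFun := Fr φ
  invFun := Fr φ.symm
  left_inv := fun x => by
    rw [Fr_comp, OrderIso.self_trans_symm]
    exact Fr_id x
  right_inv := fun x => by
    rw [Fr_comp, OrderIso.symm_trans_self]
    exact Fr_id x
  map_rel_iff' := by
    intro x y
    exact ⟨fun h => (Fr_strictMono φ).le_iff_le.mp h, fun h => (Fr_strictMono φ).monotone h⟩

lemma FrIso_apply (φ : ℚ ≃o ℚ) (x : ℝ) : FrIso φ x = Fr φ x := rfl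

/-- if `φ` is the identity above `c` and maps everything at or below `c` to at most `c`,
then the extension is the identity above `c`. -/
lemma Fr_fix_above (φ : ℚ ≃o ℚ) (c : ℝ)
    (h1 : ∀ q : ℚ, c < (q : ℝ) → φ q = q)
    (h2 : ∀ q : ℚ, (q : ℝ) ≤ c → ((φ q : ℚ) : ℝ) ≤ c)
    {x : ℝ} (hx : c < x) : Fr φ x = x := by
  apply le_antisymm
  · apply Fr_le
    intro q hq
    rcases le_or_gt (q : ℝ) c with h | h
    · exact le_trans (h2 q h) (le_of_lt hx)
    · rw [h1 q h]; exact hq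
  · apply le_of_forall_lt
    intro z hz
    have hcz : max c z < x := max_lt hx hz
    obtain ⟨q, hq1, hq2⟩ := exists_rat_btwn hcz
    have hqc : c < (q : ℝ) := lt_of_le_of_lt (le_max_left c z) hq1
    have hqz : z < (q : ℝ) := lt_of_le_of_lt (le_max_right c z) hq1
    calc z < (q : ℝ) := hqz
      _ = ((φ q : ℚ) : ℝ) := by rw [h1 q hqc]
      _ ≤ Fr φ x := le_Fr φ (le_of_lt hq2)

/-- if `φ` moves everything above `c` weakly up, then the extension is `≥ id` above `c`. -/
lemma Fr_ge_above (φ : ℚ ≃o ℚ) (c : ℝ)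
    (h1 : ∀ q : ℚ, c < (q : ℝ) → q ≤ φ q)
    {x : ℝ} (hx : c < x) : x ≤ Fr φ x := by
  apply le_of_forall_lt
  intro z hz
  have hcz : max c z < x := max_lt hx hz
  obtain ⟨q, hq1, hq2⟩ := exists_rat_btwn hcz
  have hqc : c < (q : ℝ) := lt_of_le_of_lt (le_max_left c z) hq1
  have hqz : z < (q : ℝ) := lt_of_le_of_lt (le_max_right c z) hq1
  calc z < (q : ℝ) := hqz
    _ ≤ ((φ q : ℚ) : ℝ) := by exact_mod_cast h1 q hqc
    _ ≤ Fr φ x := le_Fr φ (le_of_lt hq2)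

lemma Fr_moved (φ : ℚ ≃o ℚ) {q : ℚ} (h : q < φ q) : (q : ℝ) < Fr φ (q : ℝ) :=
  lt_of_lt_of_le (by exact_mod_cast h) (le_Fr φ (le_refl _))

end PartFive

section PartSix

lemma realSup_le {s : Set ℝ} {c : ℝ} (h : ∀ x ∈ s, x ≤ c) : realSup s ≤ (c : EReal) := by
  apply sSup_le
  rintro y ⟨x, hx, rfl⟩
  show (x : EReal) ≤ (c : EReal)
  exact_mod_cast h x hx

lemma le_realSup {s : Set ℝ} {x : ℝ} (hx : x ∈ s) : (x : EReal) ≤ realSup s :=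
  le_sSup ⟨x, hx, rfl⟩

variable {G : Type*} [Group G] [LinearOrder G]
variable [MulLeftMono G] [MulRightMono G] [Countable G]

theorem master (g₀ : G) (hg₀ : g₀ ≠ 1) :
    ∃ ρ : G →* (ℝ ≃o ℝ), Function.Injective ρ ∧
      (∀ g : G, 1 < g → realSup {x | ρ g x < x} < realSup {x | x < ρ g x}) ∧
      (∀ g h : G, (∀ n : ℤ, h ^ n < g) →
        realSup {x | ρ h x ≠ x} < realSup {x | ρ g x ≠ x}) := by
  haveI : Nonempty (Pt G) := ⟨bpt g₀ hg₀ 0⟩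
  obtain ⟨Θ⟩ := Order.iso_of_countable_dense (Pt G) ℚ
  let A : G → Pt G ≃o Pt G := fun g =>
    { toFun := pact g
      invFun := pact g⁻¹
      left_inv := fun x => by rw [pact_pact, inv_mul_cancel, pact_one]
      right_inv := fun x => by rw [pact_pact, mul_inv_cancel, pact_one]
      map_rel_iff' := by
        intro x y
        have sm : StrictMono (pact g) := fun u v huv => pact_strictMono g huv
        exact sm.le_iff_le }
  let φ : G → ℚ ≃o ℚ := fun g => (Θ.symm.trans (A g)).trans Θ
  have φ_apply : ∀ (g : G) (q : ℚ), φ g q = Θ (pact g (Θ.symm q)) := fun g q => rfl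
  have φ_mul : ∀ a b : G, φ (a * b) = (φ b).trans (φ a) := by
    intro a b
    apply DFunLike.ext
    intro q
    show Θ (pact (a * b) (Θ.symm q)) = Θ (pact a (Θ.symm (Θ (pact b (Θ.symm q)))))
    rw [OrderIso.symm_apply_apply, pact_pact]
  let ρ₀ : G → (ℝ ≃o ℝ) := fun g => FrIso (φ g)
  have hmul : ∀ a b : G, ρ₀ (a * b) = ρ₀ a * ρ₀ b := by
    intro a b
    apply DFunLike.ext
    intro x
    show Fr (φ (a * b)) x = Fr (φ a) (Fr (φ b) x)
    rw [Fr_comp, φ_mul]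
  let ρ : G →* (ℝ ≃o ℝ) := MonoidHom.mk' ρ₀ hmul
  have ρ_apply : ∀ (g : G) (x : ℝ), ρ g x = Fr (φ g) x := fun g x => rfl
  -- key fact 1 : above the base point of `g`, a positive `g` moves everything weakly up
  have key_up : ∀ (g : G) (hg : 1 < g) (x : ℝ),
      ((Θ (bpt g hg.ne' 0) : ℚ) : ℝ) < x → x ≤ ρ g x := by
    intro g hg x hx
    rw [ρ_apply]
    apply Fr_ge_above (φ g) _ _ hx
    intro q hq
    have hq' : Θ (bpt g hg.ne' 0) < q := by exact_mod_cast hq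
    have hpq : bpt g hg.ne' 0 < Θ.symm q := by
      have := Θ.symm.lt_iff_lt.mpr hq'
      rwa [Θ.symm_apply_apply] at this
    have hup := up_of_base_le hg (Θ.symm q) hpq.le
    have h2 : Θ (Θ.symm q) ≤ Θ (pact g (Θ.symm q)) := Θ.le_iff_le.mpr hup
    rw [Θ.apply_symm_apply] at h2
    rw [φ_apply]
    exact h2
  -- key fact 2 : if `g ∉ C_h` then `ρ h` is the identity above the base point of `g`
  have key_fix : ∀ (g h : G) (hg : g ≠ 1), ¬ Cls h g → ∀ x : ℝ,
      ((Θ (bpt g hg 0) : ℚ) : ℝ) < x → ρ h x = x := by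
    intro g h hg hnot x hx
    rw [ρ_apply]
    apply Fr_fix_above (φ h) _ _ _ hx
    · intro q hq
      have hq' : Θ (bpt g hg 0) < q := by exact_mod_cast hq
      have hpq : bpt g hg 0 < Θ.symm q := by
        have := Θ.symm.lt_iff_lt.mpr hq'
        rwa [Θ.symm_apply_apply] at this
      have hfix := fix_of_base_le (hg := hg) hnot (Θ.symm q) hpq.le
      rw [φ_apply, hfix, Θ.apply_symm_apply]
    · intro q hq
      by_cases hm : pact h (Θ.symm q) = Θ.symm q
      · rw [φ_apply, hm, Θ.apply_symm_apply]; exact hq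
      · have hlt := (moved_lt_base (hg := hg) hnot (Θ.symm q) hm).1
        have : Θ (pact h (Θ.symm q)) < Θ (bpt g hg 0) := Θ.lt_iff_lt.mpr hlt
        rw [φ_apply]
        calc ((Θ (pact h (Θ.symm q)) : ℚ) : ℝ) ≤ ((Θ (bpt g hg 0) : ℚ) : ℝ) := by
              exact_mod_cast this.le
          _ ≤ _ := le_refl _
  -- key fact 3 : the base points of a positive `g` are moved strictly up
  have key_mv : ∀ (g : G) (hg : 1 < g) (p : ℚ),
      ((Θ (bpt g hg.ne' p) : ℚ) : ℝ) < ρ g ((Θ (bpt g hg.ne' p) : ℚ) : ℝ) := by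
    intro g hg p
    rw [ρ_apply]
    apply Fr_moved
    rw [φ_apply, Θ.symm_apply_apply]
    exact Θ.lt_iff_lt.mpr (base_moves hg p)
  have hpos : ∀ k : G, 1 < k → ρ k ≠ 1 := by
    intro k hk h1
    have := key_mv k hk 0
    rw [h1] at this
    exact lt_irrefl _ this
  refine ⟨ρ, ?_, ?_, ?_⟩
  · rw [injective_iff_map_eq_one]
    intro g hgone
    by_contra hne
    rcases lt_trichotomy g 1 with hlt | heq | hgt
    · have hinv : (1 : G) < g⁻¹ := Left.one_lt_inv_iff.mpr hlt
      apply hpos g⁻¹ hinv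
      rw [map_inv, hgone, inv_one]
    · exact hne heq
    · exact hpos g hgt hgone
  · intro g hg
    have hcc : Θ (bpt g hg.ne' 0) < Θ (bpt g hg.ne' 1) :=
      Θ.lt_iff_lt.mpr (bpt_lt (by norm_num))
    have hL : realSup {x | ρ g x < x} ≤ ((Θ (bpt g hg.ne' 0) : ℚ) : ℝ) := by
      apply realSup_le
      intro x hx
      by_contra hcx
      push_neg at hcx
      exact absurd hx (not_lt.mpr (key_up g hg x hcx))
    have hR : (((Θ (bpt g hg.ne' 1) : ℚ) : ℝ) : EReal) ≤ realSup {x | x < ρ g x} :=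
      le_realSup (key_mv g hg 1)
    refine lt_of_le_of_lt hL (lt_of_lt_of_le ?_ hR)
    exact_mod_cast hcc
  · intro g h hn
    have hg : 1 < g := by
      have := hn 0
      rwa [zpow_zero] at this
    have hnot : ¬ Cls h g := by
      rintro ⟨n, ha, hb⟩
      rcases max_choice h h⁻¹ with hmax | hmax
      · have hmm : mm h = h := hmax
        rw [hmm] at ha
        have : g ≤ h ^ (n : ℤ) := by rwa [zpow_natCast]
        exact absurd this (not_le.mpr (hn n))
      · have hmm : mm h = h⁻¹ := hmax
        rw [hmm] at ha
        have : g ≤ h ^ (-(n : ℤ)) := by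
          rwa [zpow_neg, zpow_natCast, ← inv_pow]
        exact absurd this (not_le.mpr (hn (-n)))
    have hcc : Θ (bpt g hg.ne' 0) < Θ (bpt g hg.ne' 1) :=
      Θ.lt_iff_lt.mpr (bpt_lt (by norm_num))
    have hL : realSup {x | ρ h x ≠ x} ≤ ((Θ (bpt g hg.ne' 0) : ℚ) : ℝ) := by
      apply realSup_le
      intro x hx
      by_contra hcx
      push_neg at hcx
      exact hx (key_fix g h hg.ne' hnot x hcx)
    have hR : (((Θ (bpt g hg.ne' 1) : ℚ) : ℝ) : EReal) ≤ realSup {x | ρ g x ≠ x} :=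
      le_realSup (key_mv g hg 1).ne'
    refine lt_of_le_of_lt hL (lt_of_lt_of_le ?_ hR)
    exact_mod_cast hcc

end PartSix

/-- Every countable bi-ordered group admits a faithful action on the real line by
orientation-preserving homeomorphisms (elements of `ℝ ≃o ℝ`), such that
(i) for `1 < g`, `sup {x | g x > x} > sup {x | g x < x}` (suprema in `[-∞,+∞]`), and
(ii) if `g ≫ h` (i.e. `hⁿ < g` for all `n : ℤ`) then
`sup {x | g x ≠ x} > sup {x | h x ≠ x}`. -/
theorem countable_biordered_dynamical_realization
    {G : Type*} [Group G] [Countable G] (r : G → G → Prop) (hr : IsBiOrder r) :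
    ∃ ρ : G →* (ℝ ≃o ℝ), Function.Injective ρ ∧
      (∀ g : G, r 1 g → realSup {x | ρ g x < x} < realSup {x | x < ρ g x}) ∧
      (∀ g h : G, (∀ n : ℤ, r (h ^ n) g) →
        realSup {x | ρ h x ≠ x} < realSup {x | ρ g x ≠ x}) := by
  by_cases hT : ∀ g : G, g = 1
  · refine ⟨1, ?_, ?_, ?_⟩
    · intro a b _
      rw [hT a, hT b]
    · intro g hg
      rw [hT g] at hg
      exact absurd hg (hr.irrefl 1)
    · intro g h hn
      have h0 := hn 0
      rw [zpow_zero, hT g] at h0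
      exact absurd h0 (hr.irrefl 1)
  · push_neg at hT
    obtain ⟨g₀, hg₀⟩ := hT
    haveI : IsIrrefl G r := ⟨hr.irrefl⟩
    haveI : IsTrans G r := ⟨hr.trans⟩
    haveI : IsTrichotomous G r := ⟨fun a b hab hba => by
      by_cases h : a = b
      · exact h
      · rcases hr.total a b h with h' | h'
        · exact absurd h' hab
        · exact absurd h' hba⟩
    haveI : IsStrictTotalOrder G r := {}
    letI : DecidableRel r := fun a b => Classical.dec _
    letI : LinearOrder G := linearOrderOfSTO r
    haveI : MulLeftMono G := ⟨fun c a b hab => by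
      have hab' : a = b ∨ r a b := hab
      rcases hab' with rfl | h
      · exact le_refl _
      · exact Or.inr (hr.mul_left a b c h)⟩
    haveI : MulRightMono G := ⟨fun c a b hab => by
      have hab' : a = b ∨ r a b := hab
      rcases hab' with rfl | h
      · exact le_refl _
      · exact Or.inr (hr.mul_right a b c h)⟩
    obtain ⟨ρ, hinj, hi, hii⟩ := master g₀ hg₀
    exact ⟨ρ, hinj, hi, hii⟩
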